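/- Let n ≥ 3 be odd and set λ_k = π(4k−n)/(n+2) for k = 1,…,n. Then the numbers z_k = e^{−iλ_k} are pairwise distinct and {z_1,…,z_n} = {z ∈ ℂ : z^{n+2} = −1} \ {e^{iπn/(n+2)}, e^{−iπn/(n+2)}}, and there exist real numbers X_1,…,X_n with |X_k| = 2^{1−n} ∏_{s≠k} |sin((λ_s−λ_k)/2)|^{−1} such that ∑_{k=1}^n X_k e^{−i m λ_k} = δ_{m,1} for every m = 1,…,n. -/

import Mathlib

open Complex Finset Polynomial

private lemma exp_diff' (a b : ℝ) :
    Complex.exp (-Complex.I * a) - Complex.exp (-Complex.I * b)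
    = Complex.exp (-Complex.I * (((a+b)/2 : ℝ))) * (-2 * Complex.I)
        * Complex.sin (((a-b)/2 : ℝ)) := by
  have e1 : Complex.exp (-Complex.I * a)
      = Complex.exp (-Complex.I * (((a+b)/2 : ℝ))) *
        Complex.exp (-((((a-b)/2 : ℝ)) : ℂ) * Complex.I) := by
    rw [← Complex.exp_add]; congr 1; push_cast; ring
  have e2 : Complex.exp (-Complex.I * b)
      = Complex.exp (-Complex.I * (((a+b)/2 : ℝ))) *
        Complex.exp (((((a-b)/2 : ℝ)) : ℂ) * Complex.I) := by
    rw [← Complex.exp_add]; congr 1; push_cast; ring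
  rw [e1, e2, Complex.sin]
  ring_nf
  rw [Complex.I_sq]
  ring

private lemma abs_exp_diff' (a b : ℝ) :
    ‖Complex.exp (-Complex.I * a) - Complex.exp (-Complex.I * b)‖
    = 2 * |Real.sin ((a-b)/2)| := by
  rw [exp_diff', norm_mul, norm_mul, ← Complex.ofReal_sin, Complex.norm_real,
    Complex.norm_exp]
  norm_num

private lemma exp_eq_exp_real' {a b : ℝ}
    (h : Complex.exp (-Complex.I * a) = Complex.exp (-Complex.I * b)) :
    ∃ m : ℤ, b - a = m * (2 * Real.pi) := by
  rw [Complex.exp_eq_exp_iff_exists_int] at h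
  obtain ⟨m, hm⟩ := h
  refine ⟨m, ?_⟩
  have h2 : Complex.I * ((b : ℂ) - a) = Complex.I * ((m : ℂ) * (2 * Real.pi)) := by
    linear_combination hm
  have h3 := mul_left_cancel₀ Complex.I_ne_zero h2
  exact_mod_cast h3

private lemma lagrange_weights' {n : ℕ} (z : Fin n → ℂ) (hz : Function.Injective z)
    (j : ℕ) (hj : j < n) :
    ∑ k : Fin n, z k ^ j * ∏ s ∈ Finset.univ.erase k, (z s / (z s - z k))
      = if j = 0 then 1 else 0 := by
  classical
  have hInj : Set.InjOn z (Finset.univ : Finset (Fin n)) := hz.injOn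
  have hdeg : (X ^ j : ℂ[X]).degree < (Finset.univ : Finset (Fin n)).card := by
    rw [Polynomial.degree_X_pow, Finset.card_univ, Fintype.card_fin]
    exact_mod_cast hj
  have hp := Lagrange.eq_interpolate hInj hdeg
  have h := congrArg (Polynomial.eval 0) hp
  rw [Lagrange.interpolate_apply, Polynomial.eval_pow, Polynomial.eval_X,
    Polynomial.eval_finset_sum] at h
  rw [zero_pow_eq] at h
  rw [h]
  apply Finset.sum_congr rfl
  intro k _
  rw [Polynomial.eval_mul, Polynomial.eval_C, Polynomial.eval_pow, Polynomial.eval_X,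
    Lagrange.basis, Polynomial.eval_prod]
  congr 1
  apply Finset.prod_congr rfl
  intro s hs
  have hne : z s ≠ z k := by
    intro h
    exact (Finset.mem_erase.mp hs).1 (hz h)
  rw [Lagrange.basisDivisor, Polynomial.eval_mul, Polynomial.eval_C,
    Polynomial.eval_sub, Polynomial.eval_X, Polynomial.eval_C]
  rw [zero_sub, inv_mul_eq_div, div_eq_div_iff (sub_ne_zero.mpr hne)
    (sub_ne_zero.mpr fun h => hne h.symm)]
  ring


private lemma pow_root' (n : ℕ) (a : ℤ) (ha : Odd a) (x : ℝ)
    (hx : x = Real.pi * a / ((n:ℝ)+2)) :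
    Complex.exp (-Complex.I * x) ^ (n + 2) = -1 := by
  have hn2 : ((n:ℂ)+2) ≠ 0 := by
    have : ((n:ℝ)+2) ≠ 0 := by positivity
    exact_mod_cast this
  rw [← Complex.exp_nat_mul]
  have he : ((n + 2 : ℕ) : ℂ) * (-Complex.I * x) = (-a : ℤ) * (Real.pi * Complex.I) := by
    rw [hx]
    push_cast
    field_simp
  rw [he, Complex.exp_int_mul]
  have h2 : Complex.exp ((Real.pi : ℂ) * Complex.I) = -1 := Complex.exp_pi_mul_I
  rw [h2]
  exact ha.neg.neg_one_zpow

private lemma angle_eq_aux' (n : ℕ) (a b : ℤ)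
    (h : Complex.exp (-Complex.I * ((Real.pi * (a:ℝ) / ((n:ℝ)+2) : ℝ) : ℂ)) =
         Complex.exp (-Complex.I * ((Real.pi * (b:ℝ) / ((n:ℝ)+2) : ℝ) : ℂ))) :
    ∃ m : ℤ, b - a = 2 * m * ((n:ℤ)+2) := by
  obtain ⟨m, hm⟩ := exp_eq_exp_real' h
  refine ⟨m, ?_⟩
  have hπ := Real.pi_ne_zero
  have hn2 : ((n:ℝ)+2) ≠ 0 := by positivity
  field_simp at hm
  have h2 : ((b:ℝ) - a) * Real.pi = (2*m*((n:ℝ)+2)) * Real.pi := by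
    linear_combination Real.pi * hm
  have h3 := mul_right_cancel₀ hπ h2
  exact_mod_cast h3

private lemma resolve' (n : ℕ) (e m : ℤ) (hodd : Odd n) (h : 2 * e = m * ((n:ℤ)+2))
    (he : |e| < (n:ℤ)+2) : e = 0 := by
  have hpos : (0:ℤ) < (n:ℤ)+2 := by positivity
  rcases Int.even_or_odd m with ⟨c, hc⟩ | ho
  · have hce : e = c * ((n:ℤ)+2) := by subst hc; linarith
    have hc0 : c = 0 := by
      by_contra hc0
      have h1 : 1 ≤ |c| := Int.one_le_abs hc0
      rw [hce, abs_mul, abs_of_pos hpos] at he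
      nlinarith
    rw [hce, hc0, zero_mul]
  · exfalso
    have hno : Odd ((n:ℤ)+2) := by
      obtain ⟨t, ht⟩ := hodd
      exact ⟨(t:ℤ)+1, by push_cast [ht]; ring⟩
    have h1 : Odd (m * ((n:ℤ)+2)) := ho.mul hno
    rw [← h] at h1
    exact (Int.not_odd_iff_even.mpr ⟨e, by ring⟩) h1


private lemma weight_real' {n : ℕ} (hn : 3 ≤ n) (hodd : Odd n) (z : Fin n → ℂ)
    (hinj : Function.Injective z)
    (hz0 : ∀ k, z k ≠ 0) (hconj : ∀ k, (starRingEnd ℂ) (z k) = (z k)⁻¹)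
    (hroot : ∀ k, z k ^ (n+2) = -1) (hprod : ∏ k, z k = -1) (k : Fin n) :
    (starRingEnd ℂ) ((∏ s ∈ Finset.univ.erase k, (z s / (z s - z k))) / z k)
      = (∏ s ∈ Finset.univ.erase k, (z s / (z s - z k))) / z k := by
  have hsub : ∀ s, s ≠ k → z s - z k ≠ 0 := fun s hs =>
    sub_ne_zero.mpr (fun h => hs (hinj h))
  have hA0 : (∏ s ∈ Finset.univ.erase k, (z s - z k)) ≠ 0 :=
    Finset.prod_ne_zero_iff.mpr (fun s hs => hsub s (Finset.mem_erase.mp hs).1)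
  have hcard : (Finset.univ.erase k).card = n - 1 := by
    rw [Finset.card_erase_of_mem (Finset.mem_univ k), Finset.card_univ, Fintype.card_fin]
  have hfac : ∀ s ∈ Finset.univ.erase k, (starRingEnd ℂ) (z s / (z s - z k))
      = z k / (z k - z s) := by
    intro s hs
    have hne := hsub s (Finset.mem_erase.mp hs).1
    have hzne : z s ≠ z k := sub_ne_zero.mp hne
    rw [map_div₀, map_sub, hconj, hconj]
    have h1 : (z s)⁻¹ - (z k)⁻¹ ≠ 0 := by
      rw [sub_ne_zero]
      intro h
      exact hzne (inv_injective h)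
    rw [div_eq_div_iff h1 (sub_ne_zero.mpr (fun h => hzne h.symm))]
    field_simp [hz0 s, hz0 k]
  rw [map_div₀, map_prod, Finset.prod_congr rfl hfac, hconj]
  rw [Finset.prod_div_distrib, Finset.prod_div_distrib, Finset.prod_const, hcard]
  have hB : ∏ s ∈ Finset.univ.erase k, (z k - z s)
      = ∏ s ∈ Finset.univ.erase k, (z s - z k) := by
    calc ∏ s ∈ Finset.univ.erase k, (z k - z s)
        = ∏ s ∈ Finset.univ.erase k, ((-1) * (z s - z k)) :=
          Finset.prod_congr rfl (fun s _ => by ring)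
      _ = (∏ _s ∈ Finset.univ.erase k, (-1 : ℂ)) * ∏ s ∈ Finset.univ.erase k, (z s - z k) :=
          Finset.prod_mul_distrib
      _ = ∏ s ∈ Finset.univ.erase k, (z s - z k) := by
          rw [Finset.prod_const, hcard, (Nat.Odd.sub_odd hodd odd_one).neg_one_pow, one_mul]
  rw [hB]
  have hP : z k * ∏ s ∈ Finset.univ.erase k, z s = -1 := by
    rw [Finset.mul_prod_erase Finset.univ z (Finset.mem_univ k), hprod]
  obtain ⟨m, rfl⟩ := Nat.exists_eq_add_of_le hn
  have hr : z k ^ (m + 5) = -1 := by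
    have h := hroot k
    rwa [show 3 + m + 2 = m + 5 by omega] at h
  have hm1 : 3 + m - 1 = m + 2 := by omega
  rw [hm1]
  have hPval : ∏ s ∈ Finset.univ.erase k, z s = z k ^ (m+4) := by
    apply mul_left_cancel₀ (hz0 k)
    rw [hP, show z k * z k ^ (m+4) = z k ^ (m+5) by ring, hr]
  have hinv2 : (z k)⁻¹ = -(z k ^ (m+4)) := by
    have h2 : z k * (-(z k ^ (m+4))) = 1 := by
      rw [show z k * (-(z k ^ (m+4))) = -(z k ^ (m+5)) by ring, hr]; ring
    exact (eq_inv_of_mul_eq_one_right h2).symm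
  rw [div_div, div_div, div_eq_div_iff (by simp [hA0, hz0 k]) (by simp [hA0, hz0 k])]
  rw [hPval, hinv2]
  linear_combination (∏ s ∈ Finset.univ.erase k, (z s - z k)) * z k ^ (m+3) * hr

/-- for odd n ≥ 3 and λ_k = π(4k-n)/(n+2), k = 1,…,n (indexed here by
k : Fin n, so the actual index is k+1), the points z_k = e^{-iλ_k} are pairwise distinct,
they form the set of (n+2)-th roots of -1 minus {e^{iπn/(n+2)}, e^{-iπn/(n+2)}}, and there
exist real amplitudes X_k with the stated moduli realizing the moment conditions for μ = 1. -/
theorem stmt2 (n : ℕ) (hn : 3 ≤ n) (hodd : Odd n)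
    (lam : Fin n → ℝ)
    (hlam : ∀ k : Fin n, lam k = Real.pi * (4 * ((k : ℕ) + 1) - (n : ℝ)) / ((n : ℝ) + 2)) :
    Function.Injective (fun k : Fin n => Complex.exp (-Complex.I * (lam k : ℝ)))
    ∧ Set.range (fun k : Fin n => Complex.exp (-Complex.I * (lam k : ℝ)))
        = {z : ℂ | z ^ (n + 2) = -1} \
          {Complex.exp (Complex.I * ((Real.pi * n / (n + 2) : ℝ) : ℂ)),
           Complex.exp (-Complex.I * ((Real.pi * n / (n + 2) : ℝ) : ℂ))}
    ∧ ∃ X : Fin n → ℝ,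
        (∀ k : Fin n, |X k| = (1 / 2 ^ (n - 1)) *
          ∏ s ∈ Finset.univ.erase k, |Real.sin ((lam s - lam k) / 2)|⁻¹)
        ∧ ∀ m ∈ Finset.Icc 1 n,
            ∑ k : Fin n, (X k : ℂ) * Complex.exp (-Complex.I * m * (lam k : ℝ))
              = if m = 1 then 1 else 0 := by
  classical
  set z : Fin n → ℂ := fun k => Complex.exp (-Complex.I * (lam k : ℝ)) with hz_def
  -- integer angles
  set a : Fin n → ℤ := fun k => 4 * ((k:ℕ)+1) - n with ha_def
  have hlam' : ∀ k, lam k = Real.pi * ((a k : ℤ) : ℝ) / ((n:ℝ)+2) := by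
    intro k
    rw [hlam, ha_def]
    push_cast
    ring
  have hodda : ∀ k, Odd (a k) := by
    intro k
    obtain ⟨t, ht⟩ := hodd
    refine ⟨2*((k:ℕ):ℤ) + 1 - t, ?_⟩
    rw [ha_def]
    push_cast [ht]
    ring
  have hoddn : Odd ((n:ℤ)) := by exact_mod_cast hodd
  have hzform : ∀ k, z k = Complex.exp (-Complex.I *
      ((Real.pi * ((a k : ℤ):ℝ) / ((n:ℝ)+2) : ℝ) : ℂ)) := by
    intro k; rw [hz_def]; simp only []; rw [hlam' k]
  -- injectivity
  have hinj : Function.Injective z := by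
    intro j k h
    rw [hzform j, hzform k] at h
    obtain ⟨m, hm⟩ := angle_eq_aux' n (a j) (a k) h
    have hak : a k - a j = 4 * ((k:ℕ):ℤ) - 4 * ((j:ℕ):ℤ) := by rw [ha_def]; push_cast; ring
    have h2 : 2 * (((k:ℕ):ℤ) - (j:ℕ)) = m * ((n:ℤ)+2) := by linarith
    have he : |((k:ℕ):ℤ) - (j:ℕ)| < (n:ℤ)+2 := by
      have hk := k.isLt
      have hj := j.isLt
      rw [abs_lt]
      constructor <;> [omega; omega]
    have := resolve' n _ m hodd h2 he
    have : (k:ℕ) = (j:ℕ) := by omega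
    exact (Fin.ext this).symm
  -- roots
  have hzroot : ∀ k, z k ^ (n+2) = -1 := by
    intro k
    rw [hz_def]
    exact pow_root' n (a k) (hodda k) (lam k) (hlam' k)
  -- the two excluded points
  set e₁ : ℂ := Complex.exp (Complex.I * ((Real.pi * n / (n + 2) : ℝ) : ℂ)) with he₁_def
  set e₂ : ℂ := Complex.exp (-Complex.I * ((Real.pi * n / (n + 2) : ℝ) : ℂ)) with he₂_def
  have he₁form : e₁ = Complex.exp (-Complex.I *
      ((Real.pi * (((-(n:ℤ)) : ℤ):ℝ) / ((n:ℝ)+2) : ℝ) : ℂ)) := by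
    rw [he₁_def]; congr 1 <;> push_cast <;> ring_nf
  have he₂form : e₂ = Complex.exp (-Complex.I *
      ((Real.pi * ((((n:ℤ)) : ℤ):ℝ) / ((n:ℝ)+2) : ℝ) : ℂ)) := by
    rw [he₂_def]; congr 1 <;> push_cast <;> ring_nf
  have he₁root : e₁ ^ (n+2) = -1 := by
    rw [he₁form]
    exact pow_root' n (-(n:ℤ)) hoddn.neg _ (by push_cast; try ring)
  have he₂root : e₂ ^ (n+2) = -1 := by
    rw [he₂form]
    exact pow_root' n ((n:ℤ)) hoddn _ (by push_cast; try ring)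
  have hze₁ : ∀ k, z k ≠ e₁ := by
    intro k h
    rw [hzform k, he₁form] at h
    obtain ⟨m, hm⟩ := angle_eq_aux' n (a k) (-(n:ℤ)) h
    have hak : (-(n:ℤ)) - a k = -4*((k:ℕ):ℤ) - 4 := by rw [ha_def]; push_cast; ring
    have h2 : 2 * (-((k:ℕ):ℤ) - 1) = m * ((n:ℤ)+2) := by linarith
    have hk := k.isLt
    have he : |(-((k:ℕ):ℤ) - 1)| < (n:ℤ)+2 := by rw [abs_lt]; omega
    have := resolve' n _ m hodd h2 he
    omega
  have hze₂ : ∀ k, z k ≠ e₂ := by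
    intro k h
    rw [hzform k, he₂form] at h
    obtain ⟨m, hm⟩ := angle_eq_aux' n (a k) ((n:ℤ)) h
    have hak : ((n:ℤ)) - a k = 2*(n:ℤ) - 4*((k:ℕ):ℤ) - 4 := by rw [ha_def]; push_cast; ring
    have h2 : 2 * ((n:ℤ) - 2*((k:ℕ):ℤ) - 2) = (2*m) * ((n:ℤ)+2) := by linarith
    have hk := k.isLt
    have he : |((n:ℤ) - 2*((k:ℕ):ℤ) - 2)| < (n:ℤ)+2 := by rw [abs_lt]; omega
    have h0 := resolve' n _ (2*m) hodd h2 he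
    obtain ⟨t, ht⟩ := hodd
    omega
  have he₁e₂ : e₁ ≠ e₂ := by
    intro h
    rw [he₁form, he₂form] at h
    obtain ⟨m, hm⟩ := angle_eq_aux' n (-(n:ℤ)) ((n:ℤ)) h
    have h2 : 2 * ((n:ℤ)) = (2*m) * ((n:ℤ)+2) := by linarith
    have he : |((n:ℤ))| < (n:ℤ)+2 := by rw [abs_lt]; omega
    have := resolve' n _ (2*m) hodd h2 he
    omega
  -- set equality via polynomial roots
  have hseteq : Set.range z = {w : ℂ | w ^ (n + 2) = -1} \ {e₁, e₂} := by
    set p : ℂ[X] := X ^ (n+2) + C 1 with hp_def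
    have hpmonic : p.Monic := by
      rw [hp_def]
      exact Polynomial.monic_X_pow_add_C 1 (by omega)
    have hp0 : p ≠ 0 := hpmonic.ne_zero
    have hpdeg : p.natDegree = n + 2 := by
      rw [hp_def]
      exact Polynomial.natDegree_X_pow_add_C
    have hmem : ∀ w : ℂ, w ^ (n+2) = -1 ↔ w ∈ p.roots.toFinset := by
      intro w
      rw [Multiset.mem_toFinset, Polynomial.mem_roots hp0, Polynomial.IsRoot, hp_def]
      simp only [Polynomial.eval_add, Polynomial.eval_pow, Polynomial.eval_X,
        Polynomial.eval_C]
      constructor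
      · intro h; rw [h]; ring
      · intro h; linear_combination h
    set T : Finset ℂ := (Finset.univ.image z) ∪ {e₁, e₂} with hT_def
    have hTsub : T ⊆ p.roots.toFinset := by
      intro w hw
      rw [hT_def, Finset.mem_union] at hw
      rcases hw with hw | hw
      · obtain ⟨k, _, rfl⟩ := Finset.mem_image.mp hw
        exact (hmem _).mp (hzroot k)
      · rcases Finset.mem_insert.mp hw with rfl | hw
        · exact (hmem _).mp he₁root
        · rw [Finset.mem_singleton] at hw
          subst hw
          exact (hmem _).mp he₂root
    have hTcard : T.card = n + 2 := by
      rw [hT_def, Finset.card_union_of_disjoint, Finset.card_image_of_injective _ hinj]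
      · rw [Finset.card_univ, Fintype.card_fin, Finset.card_insert_of_notMem
          (by simp [he₁e₂]), Finset.card_singleton]
      · rw [Finset.disjoint_right]
        intro w hw hw2
        obtain ⟨k, _, rfl⟩ := Finset.mem_image.mp hw2
        rcases Finset.mem_insert.mp hw with h | h
        · exact hze₁ k h
        · exact hze₂ k (Finset.mem_singleton.mp h)
    have hTcard2 : p.roots.toFinset.card ≤ T.card := by
      rw [hTcard]
      calc p.roots.toFinset.card ≤ Multiset.card p.roots := Multiset.toFinset_card_le _
        _ ≤ p.natDegree := Polynomial.card_roots' p
        _ = n + 2 := hpdeg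
    have hT : T = p.roots.toFinset := Finset.eq_of_subset_of_card_le hTsub hTcard2
    ext w
    simp only [Set.mem_diff, Set.mem_setOf_eq, Set.mem_insert_iff, Set.mem_singleton_iff,
      Set.mem_range]
    constructor
    · rintro ⟨k, rfl⟩
      exact ⟨hzroot k, by push_neg; exact ⟨hze₁ k, hze₂ k⟩⟩
    · rintro ⟨hroot, hne⟩
      push_neg at hne
      have : w ∈ T := by rw [hT]; exact (hmem w).mp hroot
      rw [hT_def, Finset.mem_union] at this
      rcases this with h | h
      · obtain ⟨k, _, rfl⟩ := Finset.mem_image.mp h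
        exact ⟨k, rfl⟩
      · rcases Finset.mem_insert.mp h with rfl | h
        · exact absurd rfl hne.1
        · exact absurd (Finset.mem_singleton.mp h) hne.2
  refine ⟨hinj, hseteq, ?_⟩
  -- amplitudes
  have hn2 : ((n:ℝ)+2) ≠ 0 := by positivity
  have hz0 : ∀ k, z k ≠ 0 := fun k => Complex.exp_ne_zero _
  have hconj : ∀ k, (starRingEnd ℂ) (z k) = (z k)⁻¹ := by
    intro k
    rw [hz_def]
    simp only []
    rw [← Complex.exp_conj, ← Complex.exp_neg]
    congr 1
    rw [map_mul, map_neg, Complex.conj_I, Complex.conj_ofReal]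
    ring
  have hS : ∑ k : Fin n, lam k = Real.pi * n := by
    have hgauss : ((∑ i ∈ Finset.range n, i : ℕ) : ℝ) * 2 = (n:ℝ) * ((n:ℝ) - 1) := by
      have h := Finset.sum_range_id_mul_two n
      have h2 : (((∑ i ∈ Finset.range n, i) * 2 : ℕ) : ℝ) = ((n * (n-1) : ℕ) : ℝ) :=
        congrArg (Nat.cast : ℕ → ℝ) h
      rw [Nat.cast_mul, Nat.cast_mul, Nat.cast_sub (show 1 ≤ n by omega), Nat.cast_one] at h2
      simpa using h2
    have h1 : ∀ k : Fin n, lam k = (Real.pi / ((n:ℝ)+2)) * (4 * ((k:ℕ):ℝ) + (4 - n)) := by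
      intro k; rw [hlam]; push_cast; ring
    rw [Finset.sum_congr rfl (fun k _ => h1 k), ← Finset.mul_sum, Finset.sum_add_distrib,
      Finset.sum_const, Finset.card_univ, Fintype.card_fin, ← Finset.mul_sum]
    rw [Fin.sum_univ_eq_sum_range (fun i => ((i:ℕ):ℝ))]
    have h3 : (∑ i ∈ Finset.range n, ((i:ℕ):ℝ)) = (n:ℝ)*((n:ℝ)-1)/2 := by
      rw [← Nat.cast_sum]
      linarith [hgauss]
    rw [h3, nsmul_eq_mul]
    field_simp
    ring
  have hprod : ∏ k : Fin n, z k = -1 := by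
    rw [hz_def]
    simp only []
    rw [← Complex.exp_sum]
    have h1 : ∑ k : Fin n, -Complex.I * ((lam k : ℝ) : ℂ)
        = -Complex.I * (((∑ k : Fin n, lam k : ℝ)) : ℂ) := by
      rw [← Finset.mul_sum]
      congr 1
      push_cast
      rfl
    rw [h1, hS]
    have h2 : (-Complex.I * (((Real.pi * n : ℝ)) : ℂ)) = ((-(n:ℤ)) : ℤ) * ((Real.pi:ℂ) * Complex.I) := by
      push_cast; ring
    rw [h2, Complex.exp_int_mul, Complex.exp_pi_mul_I]
    exact hoddn.neg.neg_one_zpow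
  set Y : Fin n → ℂ := fun k => ∏ s ∈ Finset.univ.erase k, (z s / (z s - z k)) with hY_def
  have hreal : ∀ k, (starRingEnd ℂ) (Y k / z k) = Y k / z k :=
    fun k => weight_real' hn hodd z hinj hz0 hconj hzroot hprod k
  have hXC : ∀ k, (((Y k / z k).re : ℝ) : ℂ) = Y k / z k :=
    fun k => Complex.conj_eq_iff_re.mp (hreal k)
  refine ⟨fun k => (Y k / z k).re, ?_, ?_⟩
  · -- moduli
    intro k
    have habsz : ∀ j, ‖z j‖ = 1 := by
      intro j
      rw [hz_def]
      simp [Complex.norm_exp]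
    have h1 : |(Y k / z k).re| = ‖Y k / z k‖ := by
      rw [← Real.norm_eq_abs, ← Complex.norm_real, hXC]
    rw [h1, norm_div, habsz, div_one, hY_def]
    simp only []
    rw [norm_prod]
    have h2 : ∀ s ∈ Finset.univ.erase k, ‖z s / (z s - z k)‖
        = 2⁻¹ * |Real.sin ((lam s - lam k) / 2)|⁻¹ := by
      intro s hs
      rw [norm_div, habsz, hz_def]
      simp only []
      rw [abs_exp_diff' (lam s) (lam k)]
      rw [one_div, mul_inv]
    rw [Finset.prod_congr rfl h2, Finset.prod_mul_distrib, Finset.prod_const,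
      Finset.card_erase_of_mem (Finset.mem_univ k), Finset.card_univ, Fintype.card_fin]
    rw [one_div]
    rw [inv_pow]
  · -- moment conditions
    intro m hm
    rw [Finset.mem_Icc] at hm
    have hexp : ∀ k, Complex.exp (-Complex.I * (m:ℂ) * ((lam k : ℝ):ℂ)) = z k ^ m := by
      intro k
      rw [hz_def]
      simp only []
      rw [← Complex.exp_nat_mul]
      congr 1
      push_cast
      ring
    have hsum : ∑ k : Fin n, (((Y k / z k).re : ℝ) : ℂ) * Complex.exp (-Complex.I * (m:ℂ) * ((lam k : ℝ):ℂ))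
        = ∑ k : Fin n, z k ^ (m - 1) * Y k := by
      apply Finset.sum_congr rfl
      intro k _
      rw [hexp k, hXC k]
      have hpow : z k ^ m = z k ^ (m-1) * z k := by
        rw [← pow_succ]
        congr 1
        omega
      rw [hpow]
      field_simp [hz0 k]
    rw [hsum, hY_def]
    simp only []
    rw [lagrange_weights' z hinj (m-1) (by omega)]
    have : (m - 1 = 0) ↔ (m = 1) := by omega
    simp [this]
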